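/- arXiv:0907.5180 — 2 statements merged into one kernel-verified Lean document; each statement's English description precedes it below -/
import Mathlib

section
/- Let W: ℝ → ℝ be nonnegative, satisfying W(x) = (1/c) ∫_{-∞}^∞ W(y) R(x−y) dy for all x ≥ 0 with c = φ(λ)/λ, and suppose for some λ̃ ∈ (λ, λ*) that A = sup_{x ≥ 0} e^{λ̃x} W(x) is finite and positive, where φ(λ̃)/λ̃ < φ(λ)/λ and ∫ e^{λ̃ z} R(z) dz = φ(λ̃)/λ̃. Then one derives A ≤ (φ(λ̃)/λ̃)(λ/φ(λ)) A < A, a contradiction; hence sup_{x ≥ 0} e^{λ̃x} W(x) = ∞ whenever it is positive. -/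
open MeasureTheory Real Set

lemma conv_bound (R : ℝ → ℝ) (hR0 : ∀ z, 0 ≤ R z)
    (W : ℝ → ℝ) (hWz : ∀ y, y < 0 → W y = 0)
    (m C x : ℝ)
    (hC : ∀ y, 0 ≤ y → W y ≤ C * Real.exp (-(m * y)))
    (hfi : Integrable (fun z => Real.exp (m * z) * R z))
    (hWc : Integrable (fun y => W y * R (x - y))) :
    (∫ y, W y * R (x - y)) ≤
      C * Real.exp (-(m * x)) * ∫ z in Iic x, Real.exp (m * z) * R z := by
  set g : ℝ → ℝ := fun z => Real.exp (m * z) * R z with hg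
  have hgc : Integrable (fun y => g (x - y)) := hfi.comp_sub_left x
  have step1 : (∫ y, W y * R (x - y)) = ∫ y in Ici (0:ℝ), W y * R (x - y) := by
    refine (setIntegral_eq_integral_of_forall_compl_eq_zero fun y hy => ?_).symm
    rw [hWz y (by simpa [not_le] using hy), zero_mul]
  have key : ∀ y ∈ Ici (0:ℝ),
      W y * R (x - y) ≤ C * Real.exp (-(m * x)) * g (x - y) := by
    intro y hy
    have h1 : W y * R (x - y) ≤ (C * Real.exp (-(m * y))) * R (x - y) :=
      mul_le_mul_of_nonneg_right (hC y hy) (hR0 (x - y))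
    have h2 : C * Real.exp (-(m * x)) * g (x - y)
        = (C * Real.exp (-(m * y))) * R (x - y) := by
      simp only [hg]
      rw [show -(m * y) = -(m * x) + m * (x - y) by ring, Real.exp_add]
      ring
    rw [h2]; exact h1
  have step2 : (∫ y in Ici (0:ℝ), W y * R (x - y))
      ≤ ∫ y in Ici (0:ℝ), C * Real.exp (-(m * x)) * g (x - y) :=
    setIntegral_mono_on hWc.integrableOn ((hgc.const_mul _).integrableOn)
      measurableSet_Ici key
  have step3 : (∫ y in Ici (0:ℝ), C * Real.exp (-(m * x)) * g (x - y))
      = C * Real.exp (-(m * x)) * ∫ y in Ici (0:ℝ), g (x - y) :=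
    integral_const_mul _ _
  have step4 : (∫ y in Ici (0:ℝ), g (x - y)) = ∫ z in Iic x, g z := by
    have e1 : ∀ y, (Ici (0:ℝ)).indicator (fun y => g (x - y)) y
        = (Iic x).indicator g (x - y) := by
      intro y
      by_cases hy : (0:ℝ) ≤ y
      · rw [indicator_of_mem (mem_Ici.2 hy), indicator_of_mem (mem_Iic.2 (by linarith))]
      · rw [indicator_of_notMem (by simpa using hy),
          indicator_of_notMem (by simp [mem_Iic]; linarith [not_le.1 hy])]
    calc (∫ y in Ici (0:ℝ), g (x - y))
        = ∫ y, (Ici (0:ℝ)).indicator (fun y => g (x - y)) y :=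
          (integral_indicator measurableSet_Ici).symm
      _ = ∫ y, (Iic x).indicator g (x - y) := by simp_rw [e1]
      _ = ∫ z, (Iic x).indicator g z := integral_sub_left_eq_self _ volume x
      _ = ∫ z in Iic x, g z := integral_indicator measurableSet_Iic
  rw [step1]
  calc (∫ y in Ici (0:ℝ), W y * R (x - y))
      ≤ ∫ y in Ici (0:ℝ), C * Real.exp (-(m * x)) * g (x - y) := step2
    _ = C * Real.exp (-(m * x)) * ∫ z in Iic x, g z := by rw [step3, step4]

/-- If W ≥ 0 satisfies W(x) = (1/c) ∫ W(y) R(x−y) dy for x ≥ 0 with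
c = φ(λ)/λ, and λ̃ ∈ (λ, λ*) satisfies φ(λ̃)/λ̃ < φ(λ)/λ and
∫ e^{λ̃z} R(z) dz = φ(λ̃)/λ̃, then sup_{x ≥ 0} e^{λ̃x} W(x) cannot be finite and
positive; hence it is infinite whenever it is positive. -/
theorem stmt10 (ρ : ℝ → ℝ) (hρ_nonneg : ∀ x, 0 ≤ ρ x) (hρ_int : Integrable ρ)
    (hρ_mass : ∫ x, ρ x = 1)
    (R : ℝ → ℝ) (hR : ∀ x, R x = ∫ y in Ioi x, ρ y)
    (lam lamt : ℝ) (hlam : 0 < lam) (hlt : lam < lamt)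
    (φlam φlamt : ℝ)
    (hφlam : φlam = ∫ x, Real.exp (lam * x) * ρ x)
    (hφlamt : φlamt = ∫ x, Real.exp (lamt * x) * ρ x)
    (hφpos : 0 < φlam)
    (hRlam : ∫ z, Real.exp (lam * z) * R z = φlam / lam)
    (hRlamt : ∫ z, Real.exp (lamt * z) * R z = φlamt / lamt)
    (hstrict : φlamt / lamt < φlam / lam)
    (c : ℝ) (hc : c = φlam / lam)
    (W : ℝ → ℝ) (hW_meas : Measurable W) (hW_nonneg : ∀ x, 0 ≤ W x)
    (hW_zero : ∀ x < (0 : ℝ), W x = 0)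
    (hW_conv : ∀ x, Integrable (fun y => W y * R (x - y)))
    (hW_eq : ∀ x ≥ (0 : ℝ), W x = (1 / c) * ∫ y, W y * R (x - y))
    (hpos : ∃ x ≥ (0 : ℝ), 0 < W x) :
    ¬ BddAbove ((fun x => Real.exp (lamt * x) * W x) '' Ici 0) := by
  intro hbdd
  have hR0 : ∀ z, 0 ≤ R z := fun z => by
    rw [hR z]; exact setIntegral_nonneg measurableSet_Ioi fun y _ => hρ_nonneg y
  have hRanti : Antitone R := by
    intro a b hab
    rw [hR a, hR b]
    exact setIntegral_mono_set hρ_int.integrableOn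
      (ae_of_all _ fun y => hρ_nonneg y) ((Ioi_subset_Ioi hab).eventuallyLE)
  have hRmeas : Measurable R := hRanti.measurable
  have hcpos : 0 < c := by rw [hc]; exact div_pos hφpos hlam
  have hflam_int : Integrable (fun z => Real.exp (lam * z) * R z) := by
    by_contra h
    rw [integral_undef h] at hRlam
    rw [hc, ← hRlam] at hcpos
    exact lt_irrefl 0 hcpos
  have hflam_nonneg : ∀ z, 0 ≤ Real.exp (lam * z) * R z :=
    fun z => mul_nonneg (exp_pos _).le (hR0 z)
  -- the sup A
  have hSne : ((fun x => Real.exp (lamt * x) * W x) '' Ici 0).Nonempty :=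
    ⟨_, ⟨0, self_mem_Ici, rfl⟩⟩
  set A := sSup ((fun x => Real.exp (lamt * x) * W x) '' Ici 0) with hA
  have hmemle : ∀ x, 0 ≤ x → Real.exp (lamt * x) * W x ≤ A :=
    fun x hx => le_csSup hbdd ⟨x, hx, rfl⟩
  have hAcs : ∀ b, (∀ e ∈ (fun x => Real.exp (lamt * x) * W x) '' Ici 0, e ≤ b) → A ≤ b :=
    fun b hb => csSup_le hSne hb
  obtain ⟨x₀, hx₀, hWx₀⟩ := hpos
  have hApos : 0 < A := lt_of_lt_of_le (mul_pos (exp_pos _) hWx₀) (hmemle x₀ hx₀)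
  have hWleA : ∀ y, 0 ≤ y → W y ≤ A * Real.exp (-(lamt * y)) := by
    intro y hy
    have h1 := hmemle y hy
    have h2 := exp_pos (lamt * y)
    rw [Real.exp_neg, mul_comm A, ← div_eq_inv_mul, le_div_iff₀ h2, mul_comm]
    exact h1
  clear_value A
  clear hA
  by_cases hgint : Integrable (fun z => Real.exp (lamt * z) * R z)
  · -- Case 1 : the tilted tail is integrable; standard contraction argument
    have key : ∀ e ∈ (fun x => Real.exp (lamt * x) * W x) '' Ici 0,
        e ≤ A * ((φlamt / lamt) / c) := by
      rintro e ⟨x, hx, rfl⟩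
      have hb := conv_bound R hR0 W hW_zero lamt A x hWleA hgint (hW_conv x)
      have h2 : (∫ z in Iic x, Real.exp (lamt * z) * R z) ≤ φlamt / lamt := by
        rw [← hRlamt]
        exact setIntegral_le_integral hgint
          (ae_of_all _ fun z => mul_nonneg (exp_pos _).le (hR0 z))
      have h3 : (∫ y, W y * R (x - y)) ≤ A * Real.exp (-(lamt * x)) * (φlamt / lamt) := by
        refine le_trans hb ?_
        exact mul_le_mul_of_nonneg_left h2 (by positivity)
      have hWx := hW_eq x hx
      have hexp : Real.exp (lamt * x) * Real.exp (-(lamt * x)) = 1 := by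
        rw [← Real.exp_add]; simp
      calc Real.exp (lamt * x) * W x
          = (1 / c) * (Real.exp (lamt * x) * ∫ y, W y * R (x - y)) := by
            rw [hWx]; ring
        _ ≤ (1 / c) * (Real.exp (lamt * x) * (A * Real.exp (-(lamt * x)) * (φlamt / lamt))) := by
            have hcc : (0:ℝ) ≤ 1 / c := by positivity
            exact mul_le_mul_of_nonneg_left
              (mul_le_mul_of_nonneg_left h3 (exp_pos _).le) hcc
        _ = A * ((φlamt / lamt) / c) := by
            rw [show Real.exp (lamt * x) * (A * Real.exp (-(lamt * x)) * (φlamt / lamt))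
                = (Real.exp (lamt * x) * Real.exp (-(lamt * x))) * (A * (φlamt / lamt)) by
                  ring, hexp]
            ring
    have hle : A ≤ A * ((φlamt / lamt) / c) := hAcs _ key
    have hθ : (φlamt / lamt) / c < 1 := (div_lt_one hcpos).2 (by rw [hc]; exact hstrict)
    nlinarith
  · -- Case 2 : the tilted tail is not integrable
    have hS'ne : ((fun x => Real.exp (lam * x) * W x) '' Ici 0).Nonempty :=
      ⟨_, ⟨0, self_mem_Ici, rfl⟩⟩
    have hS'bdd : BddAbove ((fun x => Real.exp (lam * x) * W x) '' Ici 0) := by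
      refine ⟨A, ?_⟩
      rintro e ⟨x, hx, rfl⟩
      calc Real.exp (lam * x) * W x
          ≤ Real.exp (lamt * x) * W x :=
            mul_le_mul_of_nonneg_right
              (exp_le_exp.2 (mul_le_mul_of_nonneg_right hlt.le hx)) (hW_nonneg x)
        _ ≤ A := hmemle x hx
    set B := sSup ((fun x => Real.exp (lam * x) * W x) '' Ici 0) with hB
    have hmemle' : ∀ x, 0 ≤ x → Real.exp (lam * x) * W x ≤ B :=
      fun x hx => le_csSup hS'bdd ⟨x, hx, rfl⟩
    have hBcs : ∀ b, (∀ e ∈ (fun x => Real.exp (lam * x) * W x) '' Ici 0, e ≤ b) → B ≤ b :=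
      fun b hb => csSup_le hS'ne hb
    have hBpos : 0 < B := lt_of_lt_of_le (mul_pos (exp_pos _) hWx₀) (hmemle' x₀ hx₀)
    have hWleB : ∀ y, 0 ≤ y → W y ≤ B * Real.exp (-(lam * y)) := by
      intro y hy
      have h1 := hmemle' y hy
      have h2 := exp_pos (lam * y)
      rw [Real.exp_neg, mul_comm B, ← div_eq_inv_mul, le_div_iff₀ h2, mul_comm]
      exact h1
    clear_value B
    clear hB
    have hκpos : (0:ℝ) < lamt - lam := sub_pos.2 hlt
    obtain ⟨T, hT⟩ : ∃ T : ℝ, T = Real.log (2 * A / B) / (lamt - lam) := ⟨_, rfl⟩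
    -- positive tail mass beyond T
    have hδpos : 0 < ∫ z in Ioi T, Real.exp (lam * z) * R z := by
      by_cases hall : ∀ z, T < z → R z = 0
      · exfalso
        apply hgint
        have hmeasg : Measurable fun z => Real.exp (lamt * z) * R z :=
          (Real.measurable_exp.comp (measurable_id.const_mul lamt)).mul hRmeas
        refine (hflam_int.const_mul (Real.exp ((lamt - lam) * T))).mono'
          hmeasg.aestronglyMeasurable (ae_of_all _ fun z => ?_)
        rcases le_or_gt z T with hz | hz
        · rw [Real.norm_eq_abs, abs_of_nonneg (mul_nonneg (exp_pos _).le (hR0 z))]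
          have hsplit : Real.exp (lamt * z)
              = Real.exp ((lamt - lam) * z) * Real.exp (lam * z) := by
            rw [← Real.exp_add]; ring_nf
          rw [hsplit, mul_assoc]
          exact mul_le_mul_of_nonneg_right
            (exp_le_exp.2 (mul_le_mul_of_nonneg_left hz hκpos.le)) (hflam_nonneg z)
        · rw [hall z hz]
          simp only [mul_zero, norm_zero]
          positivity
      · push_neg at hall
        obtain ⟨z₀, hz₀, hRz₀⟩ := hall
        have hRzpos : 0 < R z₀ := (hR0 z₀).lt_of_ne (Ne.symm hRz₀)
        rw [setIntegral_pos_iff_support_of_nonneg_ae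
          (ae_of_all _ hflam_nonneg) hflam_int.integrableOn]
        refine lt_of_lt_of_le ?_ (measure_mono (?_ :
          Ioo T z₀ ⊆ Function.support (fun z => Real.exp (lam * z) * R z) ∩ Ioi T))
        · rw [Real.volume_Ioo]
          exact ENNReal.ofReal_pos.2 (by linarith)
        · intro w hw
          constructor
          · have : 0 < Real.exp (lam * w) * R w :=
              mul_pos (exp_pos _) (lt_of_lt_of_le hRzpos (hRanti hw.2.le))
            exact ne_of_gt this
          · exact hw.1
    -- split c over Iic T / Ioi T
    have hsplitc : (∫ z in Iic T, Real.exp (lam * z) * R z)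
        + (∫ z in Ioi T, Real.exp (lam * z) * R z) = c := by
      have h := integral_add_compl (measurableSet_Iic : MeasurableSet (Iic T)) hflam_int
      rw [compl_Iic] at h
      rw [h, hRlam, hc]
    have hITltc : (∫ z in Iic T, Real.exp (lam * z) * R z) < c := by linarith
    -- bound every element of S'
    have key : ∀ e ∈ (fun x => Real.exp (lam * x) * W x) '' Ici 0,
        e ≤ max (B * ((∫ z in Iic T, Real.exp (lam * z) * R z) / c)) (B * (1/2)) := by
      rintro e ⟨x, hx, rfl⟩
      rcases le_total x T with hxT | hTx
      · refine le_trans ?_ (le_max_left _ _)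
        have hb := conv_bound R hR0 W hW_zero lam B x hWleB hflam_int (hW_conv x)
        have hmono : (∫ z in Iic x, Real.exp (lam * z) * R z)
            ≤ ∫ z in Iic T, Real.exp (lam * z) * R z :=
          setIntegral_mono_set hflam_int.integrableOn
            (ae_of_all _ hflam_nonneg) ((Iic_subset_Iic.2 hxT).eventuallyLE)
        have h3 : (∫ y, W y * R (x - y))
            ≤ B * Real.exp (-(lam * x)) * ∫ z in Iic T, Real.exp (lam * z) * R z := by
          refine le_trans hb ?_
          exact mul_le_mul_of_nonneg_left hmono (by positivity)
        have hWx := hW_eq x hx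
        have hexp : Real.exp (lam * x) * Real.exp (-(lam * x)) = 1 := by
          rw [← Real.exp_add]; simp
        calc Real.exp (lam * x) * W x
            = (1 / c) * (Real.exp (lam * x) * ∫ y, W y * R (x - y)) := by
              rw [hWx]; ring
          _ ≤ (1 / c) * (Real.exp (lam * x) * (B * Real.exp (-(lam * x))
                * ∫ z in Iic T, Real.exp (lam * z) * R z)) := by
              have hcc : (0:ℝ) ≤ 1 / c := by positivity
              exact mul_le_mul_of_nonneg_left
                (mul_le_mul_of_nonneg_left h3 (exp_pos _).le) hcc
          _ = B * ((∫ z in Iic T, Real.exp (lam * z) * R z) / c) := by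
              rw [show Real.exp (lam * x) * (B * Real.exp (-(lam * x))
                  * ∫ z in Iic T, Real.exp (lam * z) * R z)
                  = (Real.exp (lam * x) * Real.exp (-(lam * x)))
                    * (B * ∫ z in Iic T, Real.exp (lam * z) * R z) by ring, hexp]
              ring
      · refine le_trans ?_ (le_max_right _ _)
        have h2AB : (0:ℝ) < 2 * A / B := by positivity
        have hexpT : Real.exp (-((lamt - lam) * T)) = B / (2 * A) := by
          rw [hT, show (lamt - lam) * (Real.log (2 * A / B) / (lamt - lam))
              = Real.log (2 * A / B) by field_simp]
          rw [Real.exp_neg, Real.exp_log h2AB]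
          rw [inv_div]
        have h1 : Real.exp (lam * x) * W x
            = Real.exp (-((lamt - lam) * x)) * (Real.exp (lamt * x) * W x) := by
          rw [← mul_assoc, ← Real.exp_add]
          ring_nf
        calc Real.exp (lam * x) * W x
            = Real.exp (-((lamt - lam) * x)) * (Real.exp (lamt * x) * W x) := h1
          _ ≤ Real.exp (-((lamt - lam) * x)) * A :=
              mul_le_mul_of_nonneg_left (hmemle x hx) (exp_pos _).le
          _ ≤ Real.exp (-((lamt - lam) * T)) * A := by
              refine mul_le_mul_of_nonneg_right (exp_le_exp.2 ?_) hApos.le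
              nlinarith [mul_le_mul_of_nonneg_left hTx hκpos.le]
          _ = B * (1/2) := by
              rw [hexpT]
              field_simp
    have hle : B ≤ max (B * ((∫ z in Iic T, Real.exp (lam * z) * R z) / c)) (B * (1/2)) :=
      hBcs _ key
    have hq : (∫ z in Iic T, Real.exp (lam * z) * R z) / c < 1 := (div_lt_one hcpos).2 hITltc
    have hlt1 : B * ((∫ z in Iic T, Real.exp (lam * z) * R z) / c) < B := by nlinarith
    have hlt2 : B * (1/2) < B := by linarith
    have hmax := max_lt hlt1 hlt2
    linarith
end

section
/- Let F, G: [0,T] × ℝ → ℝ satisfy, for a fixed x ∈ ℝ and all t ∈ [0,T], ∂/∂t (F − G)(t,x') = ∫_{-∞}^∞ (F(t,y) − G(t,y)) ρ(x'−y) dy for all x' in some set containing x, with F(0,y) ≥ G(0,y) for all y and ρ ≥ 0. If F − G satisfies this linear integro-differential equation for all x' ∈ ℝ and all t ∈ [0,T], then F(t,y) ≥ G(t,y) for all t ∈ [0,T] and y ∈ ℝ. -/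
open MeasureTheory Real Set

/-- Comparison principle for the linear evolution ∂H/∂t = H * ρ:
if H = F − G is bounded, satisfies ∂H/∂t(t,x) = ∫ H(t,y) ρ(x−y) dy for all x ∈ ℝ and
t ∈ [0,T], and H(0,·) ≥ 0, then F(t,y) ≥ G(t,y) for all t ∈ [0,T], y ∈ ℝ. -/
theorem stmt13 (ρ : ℝ → ℝ) (hρ_nonneg : ∀ x, 0 ≤ ρ x) (hρ_int : Integrable ρ)
    (hρ_mass : ∫ x, ρ x = 1)
    (T : ℝ) (hT : 0 < T) (F G : ℝ → ℝ → ℝ)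
    (hmeas : Measurable fun p : ℝ × ℝ => F p.1 p.2 - G p.1 p.2)
    (hbdd : ∃ B : ℝ, ∀ t ∈ Icc (0 : ℝ) T, ∀ x, |F t x - G t x| ≤ B)
    (hint : ∀ t ∈ Icc (0 : ℝ) T, ∀ x : ℝ,
      Integrable (fun y => (F t y - G t y) * ρ (x - y)))
    (hderiv : ∀ x : ℝ, ∀ t ∈ Icc (0 : ℝ) T,
      HasDerivAt (fun s => F s x - G s x)
        (∫ y, (F t y - G t y) * ρ (x - y)) t)
    (hinit : ∀ y, G 0 y ≤ F 0 y) :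
    ∀ t ∈ Icc (0 : ℝ) T, ∀ y, G t y ≤ F t y := by
  obtain ⟨B, hB⟩ := hbdd
  -- key : ∀ n, ∀ t ∈ Icc 0 T, ∀ x, G t x - F t x ≤ B * t ^ n / n !
  have key : ∀ n : ℕ, ∀ t ∈ Icc (0 : ℝ) T, ∀ x, G t x - F t x ≤ B * t ^ n / n.factorial := by
    intro n
    induction n with
    | zero =>
      intro t ht x
      simp only [pow_zero, Nat.factorial_zero, Nat.cast_one, mul_one, div_one]
      have := hB t ht x
      have h2 := neg_le_of_abs_le this
      linarith
    | succ n ih =>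
      intro t ht x
      -- the function f s = (G s x - F s x) - B * s^(n+1)/(n+1)! is antitone on [0,T]
      set c : ℝ := B / (n + 1).factorial with hc
      have hfac : ((n + 1).factorial : ℝ) = (n + 1) * n.factorial := by
        push_cast [Nat.factorial_succ]; ring
      have hfacn : (n.factorial : ℝ) ≠ 0 := by positivity
      set f : ℝ → ℝ := fun s => (G s x - F s x) - c * s ^ (n + 1) with hf
      have hderiv' : ∀ s ∈ Icc (0 : ℝ) T,
          HasDerivAt f (-(∫ y, (F s y - G s y) * ρ (x - y)) - c * ((n + 1) * s ^ n)) s := by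
        intro s hs
        have h1 : HasDerivAt (fun s => G s x - F s x)
            (-(∫ y, (F s y - G s y) * ρ (x - y))) s := by
          have := (hderiv x s hs).neg
          exact this.congr_of_eventuallyEq (Filter.Eventually.of_forall fun s' => by simp only [Pi.neg_apply, neg_sub])
        have h2 : HasDerivAt (fun s : ℝ => c * s ^ (n + 1)) (c * ((n + 1) * s ^ n)) s := by
          simpa using ((hasDerivAt_pow (n + 1) s).const_mul c)
        exact h1.sub h2
      have hcont : ContinuousOn f (Icc 0 T) := fun s hs =>
        ((hderiv' s hs).continuousAt).continuousWithinAt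
      have hanti : AntitoneOn f (Icc 0 T) := by
        apply antitoneOn_of_hasDerivWithinAt_nonpos (convex_Icc 0 T) hcont
          (f' := fun s => -(∫ y, (F s y - G s y) * ρ (x - y)) - c * ((n + 1) * s ^ n))
        · intro s hs
          have hs' : s ∈ Icc (0 : ℝ) T := interior_subset hs
          exact (hderiv' s hs').hasDerivWithinAt
        · intro s hs
          rw [interior_Icc] at hs
          have hs' : s ∈ Icc (0 : ℝ) T := Ioo_subset_Icc_self hs
          -- bound -∫ (F - G) ρ ≤ B s^n / n!
          have hbound : ∀ y, -((F s y - G s y) * ρ (x - y)) ≤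
              (B * s ^ n / n.factorial) * ρ (x - y) := by
            intro y
            have h1 : G s y - F s y ≤ B * s ^ n / n.factorial := ih s hs' y
            have h2 : 0 ≤ ρ (x - y) := hρ_nonneg _
            nlinarith [mul_le_mul_of_nonneg_right h1 h2]
          have hrint : Integrable (fun y : ℝ => ρ (x - y)) := by
            have := hρ_int.comp_sub_left x
            simpa using this
          have hintle : ∫ y, -((F s y - G s y) * ρ (x - y)) ≤
              ∫ y, (B * s ^ n / n.factorial) * ρ (x - y) :=
            integral_mono ((hint s hs' x).neg) (hrint.const_mul _) hbound
          have hmass : ∫ y, ρ (x - y) = 1 := by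
            rw [MeasureTheory.integral_sub_left_eq_self ρ volume x]; exact hρ_mass
          rw [integral_neg] at hintle
          rw [integral_const_mul, hmass, mul_one] at hintle
          have hsn : (0:ℝ) ≤ s ^ n := pow_nonneg hs.1.le n
          have : c * ((n + 1) * s ^ n) = B * s ^ n / n.factorial := by
            rw [hc, hfac]
            field_simp
          rw [this]
          linarith
      have h0 : (0 : ℝ) ∈ Icc (0 : ℝ) T := ⟨le_refl 0, hT.le⟩
      have := hanti h0 ht ht.1
      have hf0 : f 0 = G 0 x - F 0 x := by simp [hf]
      have hinit' := hinit x
      have hft : f t = (G t x - F t x) - c * t ^ (n + 1) := rfl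
      rw [hft, hf0] at this
      have : G t x - F t x ≤ c * t ^ (n + 1) := by linarith
      calc G t x - F t x ≤ c * t ^ (n + 1) := this
        _ = B * t ^ (n + 1) / (n + 1).factorial := by rw [hc]; ring
  intro t ht x
  have hlim : Filter.Tendsto (fun n : ℕ => B * t ^ n / n.factorial) Filter.atTop (nhds 0) := by
    have h1 : Filter.Tendsto (fun n : ℕ => t ^ n / n.factorial) Filter.atTop (nhds 0) :=
      FloorSemiring.tendsto_pow_div_factorial_atTop t
    have := h1.const_mul B
    simpa [mul_div_assoc] using this
  have : G t x - F t x ≤ 0 :=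
    ge_of_tendsto' hlim (fun n => key n t ht x)
  linarith
end
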